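/- For any observation x_1 > 0 from a k-component exponential mixture with component scales λ_i = λγ_i/p_i, improper prior π(λ) = 1/λ, and proper independent priors on (γ, p), the marginal likelihood equals Σ_{i=1}^k ∫ (p_i/x_1) π(γ,p) d(γ,p), which is finite; hence the posterior is proper. -/

import Mathlib

open MeasureTheory Finset Set Filter
lemma key_integral {a c : ℝ} (ha : 0 < a) (hc : 0 < c) :
    ∫⁻ l in Set.Ioi (0 : ℝ), ENNReal.ofReal (c / l * Real.exp (-(a / l)) * l⁻¹) ∂volume
      = ENNReal.ofReal (c / a) := by
  set g : ℝ → ℝ := fun l => if 0 < l then c / a * Real.exp (-(a / l)) else 0 with hg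
  set f : ℝ → ℝ := fun l => c / l * Real.exp (-(a / l)) * l⁻¹ with hf
  have hderiv : ∀ x ∈ Set.Ioi (0 : ℝ), HasDerivAt g (f x) x := by
    intro x hx
    have hx0 : (0 : ℝ) < x := hx
    have h1 : HasDerivAt (fun l : ℝ => -(a / l)) (a / x ^ 2) x := by
      have := ((hasDerivAt_inv hx0.ne').const_mul a).neg
      simpa [div_eq_mul_inv, neg_mul, mul_comm, Pi.neg_def] using
        this.congr_deriv (show -(a * -(x ^ 2)⁻¹) = a / x ^ 2 by ring)
    have h2 : HasDerivAt (fun l : ℝ => c / a * Real.exp (-(a / l)))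
        (c / a * (Real.exp (-(a / x)) * (a / x ^ 2))) x :=
      (h1.exp).const_mul _
    have heq : f x = c / a * (Real.exp (-(a / x)) * (a / x ^ 2)) := by
      rw [hf]
      field_simp
    rw [heq]
    apply h2.congr_of_eventuallyEq
    filter_upwards [eventually_gt_nhds hx0] with y hy
    simp [hg, hy]
  have hcont : ContinuousWithinAt g (Set.Ici (0 : ℝ)) 0 := by
    rw [← Set.Ioi_insert, continuousWithinAt_insert_self]
    have h0 : Tendsto (fun l : ℝ => c / a * Real.exp (-(a / l))) (nhdsWithin 0 (Set.Ioi 0))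
        (nhds 0) := by
      have h1 : Tendsto (fun l : ℝ => a / l) (nhdsWithin 0 (Set.Ioi 0)) atTop := by
        simpa [div_eq_mul_inv] using tendsto_inv_nhdsGT_zero.const_mul_atTop ha
      have := (Real.tendsto_exp_atBot).comp (tendsto_neg_atTop_atBot.comp h1)
      simpa [Function.comp] using (this.const_mul (c / a))
    unfold ContinuousWithinAt
    have : g 0 = 0 := by simp [hg]
    rw [this]
    refine h0.congr' ?_
    filter_upwards [self_mem_nhdsWithin] with y hy
    simp [hg, Set.mem_Ioi.mp hy]
  have htop : Tendsto g atTop (nhds (c / a)) := by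
    have h1 : Tendsto (fun l : ℝ => a / l) atTop (nhds 0) := by
      simpa [div_eq_mul_inv] using tendsto_inv_atTop_zero.const_mul a
    have h2 : Tendsto (fun l : ℝ => c / a * Real.exp (-(a / l))) atTop (nhds (c / a)) := by
      have := (Real.continuous_exp.tendsto 0).comp (by simpa using h1.neg)
      simpa using this.const_mul (c / a)
    refine h2.congr' ?_
    filter_upwards [eventually_gt_atTop 0] with y hy
    simp [hg, hy]
  have hpos : ∀ x ∈ Set.Ioi (0 : ℝ), 0 ≤ f x := by
    intro x hx
    have : (0:ℝ) < x := hx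
    positivity
  have hint : IntegrableOn f (Set.Ioi (0 : ℝ)) volume :=
    integrableOn_Ioi_deriv_of_nonneg hcont hderiv hpos htop
  have hval : ∫ x in Set.Ioi (0:ℝ), f x = c / a := by
    have := integral_Ioi_of_hasDerivAt_of_nonneg hcont hderiv hpos htop
    simpa [hg] using this
  rw [← hval, ← ofReal_integral_eq_lintegral_ofReal hint]
  exact (ae_restrict_iff' measurableSet_Ioi).2 (Filter.Eventually.of_forall hpos)



open MeasureTheory Finset

/-- For a single observation `x₁ > 0` from a `k`-component exponential mixture with component
scales `λ γ i / p i`, improper prior `π(λ) = 1/λ` and proper prior `Q` on `(γ, p)`, the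
marginal likelihood equals `∫ (∑ i, p i / x₁) dQ` and is finite: the posterior is proper. -/
theorem exponential_mixture_posterior_proper
    {Θ : Type*} [MeasurableSpace Θ] (Q : Measure Θ) [IsProbabilityMeasure Q] (k : ℕ)
    (γ p : Θ → Fin k → ℝ)
    (hγ : ∀ θ i, 0 < γ θ i) (hγsum : ∀ θ, ∑ i, γ θ i = 1)
    (hp : ∀ θ i, 0 < p θ i) (hpsum : ∀ θ, ∑ i, p θ i = 1)
    (x₁ : ℝ) (hx : 0 < x₁) :
    (∫⁻ θ, ∫⁻ l in Set.Ioi (0 : ℝ),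
        ENNReal.ofReal
          ((∑ i, p θ i * (p θ i / (l * γ θ i)) * Real.exp (-(p θ i * x₁ / (l * γ θ i)))) * l⁻¹)
      ∂volume ∂Q)
      = ∫⁻ θ, ENNReal.ofReal (∑ i, p θ i / x₁) ∂Q ∧
    (∫⁻ θ, ∫⁻ l in Set.Ioi (0 : ℝ),
        ENNReal.ofReal
          ((∑ i, p θ i * (p θ i / (l * γ θ i)) * Real.exp (-(p θ i * x₁ / (l * γ θ i)))) * l⁻¹)
      ∂volume ∂Q) < ⊤ := by
  have inner : ∀ θ, (∫⁻ l in Set.Ioi (0 : ℝ),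
      ENNReal.ofReal
        ((∑ i, p θ i * (p θ i / (l * γ θ i)) * Real.exp (-(p θ i * x₁ / (l * γ θ i)))) * l⁻¹)
      ∂volume) = ENNReal.ofReal (∑ i, p θ i / x₁) := by
    intro θ
    set c : Fin k → ℝ := fun i => p θ i ^ 2 / γ θ i with hcdef
    set a : Fin k → ℝ := fun i => p θ i * x₁ / γ θ i with hadef
    have hcpos : ∀ i, 0 < c i := fun i => by
      have := hp θ i; have := hγ θ i; positivity
    have hapos : ∀ i, 0 < a i := fun i => by
      have := hp θ i; have := hγ θ i; positivity
    calc (∫⁻ l in Set.Ioi (0 : ℝ),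
        ENNReal.ofReal
          ((∑ i, p θ i * (p θ i / (l * γ θ i)) * Real.exp (-(p θ i * x₁ / (l * γ θ i)))) * l⁻¹)
        ∂volume)
        = ∫⁻ l in Set.Ioi (0 : ℝ),
            ∑ i, ENNReal.ofReal (c i / l * Real.exp (-(a i / l)) * l⁻¹) ∂volume := by
          refine setLIntegral_congr_fun measurableSet_Ioi ?_
          intro l hl
          have hl0 : (0 : ℝ) < l := hl
          have hterm : ∀ i ∈ Finset.univ (α := Fin k),
              p θ i * (p θ i / (l * γ θ i)) * Real.exp (-(p θ i * x₁ / (l * γ θ i))) * l⁻¹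
                = c i / l * Real.exp (-(a i / l)) * l⁻¹ := by
            intro i _
            have harg : p θ i * x₁ / (l * γ θ i) = a i / l := by
              rw [hadef, div_div, mul_comm l]
            have hfac : p θ i * (p θ i / (l * γ θ i)) = c i / l := by
              rw [hcdef]
              field_simp [hl0.ne', (hγ θ i).ne']
            rw [harg, hfac]
          dsimp only
          rw [Finset.sum_mul, Finset.sum_congr rfl hterm,
            ENNReal.ofReal_sum_of_nonneg fun i _ => by
              have := hcpos i; positivity]
      _ = ∑ i, ∫⁻ l in Set.Ioi (0 : ℝ),
            ENNReal.ofReal (c i / l * Real.exp (-(a i / l)) * l⁻¹) ∂volume := by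
          refine lintegral_finset_sum _ fun i _ => ?_
          fun_prop
      _ = ∑ i, ENNReal.ofReal (c i / a i) := by
          exact Finset.sum_congr rfl fun i _ => key_integral (hapos i) (hcpos i)
      _ = ENNReal.ofReal (∑ i, p θ i / x₁) := by
          rw [ENNReal.ofReal_sum_of_nonneg fun i _ => by
            have := hp θ i; positivity]
          refine Finset.sum_congr rfl fun i _ => ?_
          congr 1
          rw [hcdef, hadef]
          field_simp [(hp θ i).ne', (hγ θ i).ne', hx.ne']
  have heq : (∫⁻ θ, ∫⁻ l in Set.Ioi (0 : ℝ),
      ENNReal.ofReal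
        ((∑ i, p θ i * (p θ i / (l * γ θ i)) * Real.exp (-(p θ i * x₁ / (l * γ θ i)))) * l⁻¹)
    ∂volume ∂Q) = ∫⁻ θ, ENNReal.ofReal (∑ i, p θ i / x₁) ∂Q := lintegral_congr inner
  refine ⟨heq, ?_⟩
  rw [heq]
  have : ∀ θ, ENNReal.ofReal (∑ i, p θ i / x₁) = ENNReal.ofReal (1 / x₁) := fun θ => by
    rw [← Finset.sum_div, hpsum θ]
  rw [lintegral_congr this, lintegral_const]
  simp [measure_univ, ENNReal.ofReal_lt_top]
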